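/- For every c ∈ ℂ^{ℤ_d×ℤ_d}, the operator L satisfies the compact form Lc = F*(F ∘ (F* c F*)), where ∘ denotes the Hadamard (entrywise) product of d×d matrices and juxtaposition denotes matrix multiplication. -/

import Mathlib

open Matrix Complex

/-- `ω = exp(2πi/d)`, a primitive `d`-th root of unity. -/
noncomputable def omegaRoot (d : ℕ) : ℂ := Complex.exp (2 * Real.pi * Complex.I / d)

/-- `μ = exp(2πi/(2d))`. -/
noncomputable def muRoot (d : ℕ) : ℂ := Complex.exp (2 * Real.pi * Complex.I / (2 * d))

/-- The cyclic shift matrix `S`, `S_{jk} = δ_{j,k+1}`. -/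
def Smat (d : ℕ) [NeZero d] : Matrix (ZMod d) (ZMod d) ℂ :=
  Matrix.of fun j k => if j = k + 1 then 1 else 0

/-- The modulation matrix `Ω`, `Ω_{jk} = ω^j δ_{jk}`. -/
noncomputable def Omat (d : ℕ) [NeZero d] : Matrix (ZMod d) (ZMod d) ℂ :=
  Matrix.of fun j k => if j = k then omegaRoot d ^ j.val else 0

/-- The Fourier matrix `F`, `F_{jk} = ω^{jk}/√d`. -/
noncomputable def Fmat (d : ℕ) [NeZero d] : Matrix (ZMod d) (ZMod d) ℂ :=
  Matrix.of fun j k => omegaRoot d ^ (j.val * k.val) / (Real.sqrt d : ℂ)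

/-- The diagonal matrix `R`, `R_{jj} = μ^{j(j+d)}`. -/
noncomputable def Rmat (d : ℕ) [NeZero d] : Matrix (ZMod d) (ZMod d) ℂ :=
  Matrix.of fun j k => if j = k then muRoot d ^ (j.val * (j.val + d)) else 0

/-- The operator `L`, `Lc = (1/d) Σ_{j,k} c_{jk} S^{-j} Ω^{-k}`. -/
noncomputable def Lop (d : ℕ) [NeZero d] (c : Matrix (ZMod d) (ZMod d) ℂ) :
    Matrix (ZMod d) (ZMod d) ℂ :=
  (1 / (d : ℂ)) • ∑ j : ZMod d, ∑ k : ZMod d, c j k • ((Smat d ^ j.val)⁻¹ * (Omat d ^ k.val)⁻¹)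


set_option linter.unusedSectionVars false

section
variable (d : ℕ) [NeZero d]

lemma omega_prim : IsPrimitiveRoot (omegaRoot d) d :=
  Complex.isPrimitiveRoot_exp d (NeZero.ne d)

lemma omega_pow_d : omegaRoot d ^ d = 1 := (omega_prim d).pow_eq_one

/-- `ψ t = ω^{t.val}` -/
noncomputable def psi (t : ZMod d) : ℂ := omegaRoot d ^ t.val

lemma omega_pow_mod (n : ℕ) : omegaRoot d ^ n = omegaRoot d ^ (n % d) := by
  conv_lhs => rw [← Nat.div_add_mod n d]
  rw [pow_add, pow_mul, omega_pow_d, one_pow, one_mul]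

lemma psi_natCast (n : ℕ) : psi d (n : ZMod d) = omegaRoot d ^ n := by
  rw [psi, ZMod.val_natCast, ← omega_pow_mod]

lemma psi_add (s t : ZMod d) : psi d (s + t) = psi d s * psi d t := by
  have : ((s.val + t.val : ℕ) : ZMod d) = s + t := by
    push_cast [ZMod.natCast_val, ZMod.cast_id]; ring
  rw [← this, psi_natCast, pow_add, psi, psi]

lemma psi_zero : psi d 0 = 1 := by simp [psi]

lemma psi_neg (t : ZMod d) : psi d (-t) = (psi d t)⁻¹ := by
  have h : psi d t * psi d (-t) = 1 := by rw [← psi_add]; simp [psi_zero]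
  exact (inv_eq_of_mul_eq_one_right h).symm

lemma psi_ne_zero (t : ZMod d) : psi d t ≠ 0 := by
  have h : psi d t * psi d (-t) = 1 := by rw [← psi_add]; simp [psi_zero]
  exact left_ne_zero_of_mul_eq_one h

lemma conj_omega_pow (n : ℕ) : (starRingEnd ℂ) (omegaRoot d ^ n) = psi d (-(n : ZMod d)) := by
  have habs : (starRingEnd ℂ) (omegaRoot d) = (omegaRoot d)⁻¹ := by
    rw [omegaRoot, ← Complex.exp_conj, ← Complex.exp_neg]
    congr 1
    simp [map_div₀, Complex.conj_I, map_ofNat]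
    ring
  rw [map_pow, habs, inv_pow, ← psi_natCast, ← psi_neg]
end

section
variable (d : ℕ) [NeZero d]

lemma psi_sum (t : ZMod d) :
    ∑ m : ZMod d, psi d (m * t) = if t = 0 then (d : ℂ) else 0 := by
  have key : ∀ m : ZMod d, psi d (m * t) = (omegaRoot d ^ t.val) ^ m.val := by
    intro m
    have h : ((m.val * t.val : ℕ) : ZMod d) = m * t := by
      push_cast [ZMod.natCast_zmod_val]; ring
    rw [← h, psi_natCast, mul_comm m.val t.val, pow_mul]
  simp_rw [key]
  have hbij : ∑ m : ZMod d, (omegaRoot d ^ t.val) ^ m.val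
      = ∑ i ∈ Finset.range d, (omegaRoot d ^ t.val) ^ i := by
    refine Finset.sum_nbij' (fun m => m.val) (fun i => (i : ZMod d))
      (fun m _ => Finset.mem_range.mpr (ZMod.val_lt m))
      (fun i _ => Finset.mem_univ _)
      (fun m _ => ZMod.natCast_zmod_val m)
      (fun i hi => ZMod.val_natCast_of_lt (Finset.mem_range.mp hi))
      (fun m _ => rfl)
  rw [hbij]
  split_ifs with h
  · subst h; simp [ZMod.val_zero]
  · have h1 : omegaRoot d ^ t.val ≠ 1 := by
      intro hc
      apply h
      have hdvd := ((omega_prim d).pow_eq_one_iff_dvd t.val).mp hc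
      have h2 : ((t.val : ℕ) : ZMod d) = 0 := by
        exact_mod_cast (ZMod.natCast_eq_zero_iff t.val d).mpr hdvd
      rwa [ZMod.natCast_zmod_val] at h2
    rw [geom_sum_eq h1, ← pow_mul, mul_comm, pow_mul, omega_pow_d, one_pow]
    simp
end

section
variable (d : ℕ) [NeZero d]

lemma Smat_pow (n : ℕ) :
    Smat d ^ n = Matrix.of fun a b => if a = b + (n : ZMod d) then 1 else 0 := by
  induction n with
  | zero => ext a b; simp [Matrix.one_apply]
  | succ n ih =>
    rw [pow_succ, ih]
    ext a b
    rw [Matrix.mul_apply]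
    simp only [Matrix.of_apply, Smat]
    rw [Finset.sum_eq_single (b + 1)]
    · rw [if_pos rfl, mul_one]
      have h : b + 1 + (n : ZMod d) = b + ((n : ZMod d) + 1) := by ring
      rw [h]; push_cast; rfl
    · intro y _ hy; simp [if_neg hy]
    · intro h; exact absurd (Finset.mem_univ _) h

lemma Omat_diag : Omat d = Matrix.diagonal fun a : ZMod d => omegaRoot d ^ a.val := by
  ext a b; simp [Omat, Matrix.diagonal_apply]

lemma Omat_pow (n : ℕ) :
    Omat d ^ n = Matrix.diagonal fun a : ZMod d => psi d (a * n) := by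
  rw [Omat_diag, Matrix.diagonal_pow]
  ext a b
  by_cases h : a = b
  · subst h
    simp only [Matrix.diagonal_apply_eq, Pi.pow_apply]
    rw [← pow_mul, ← psi_natCast]
    congr 1
    push_cast [ZMod.natCast_zmod_val]
    ring
  · simp [Matrix.diagonal_apply_ne _ h]

lemma Smat_pow_inv (j : ZMod d) :
    (Smat d ^ j.val)⁻¹ = Matrix.of fun a b => if b = a + j then (1 : ℂ) else 0 := by
  apply Matrix.inv_eq_right_inv
  rw [Smat_pow]
  have hj : ((j.val : ℕ) : ZMod d) = j := ZMod.natCast_zmod_val j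
  ext a b
  rw [Matrix.mul_apply]
  rw [Finset.sum_eq_single (a - j)]
  · simp only [Matrix.of_apply, hj]
    rw [if_pos (by ring)]
    have h2 : a - j + j = a := by ring
    rw [one_mul, h2, Matrix.one_apply]
    simp [eq_comm]
  · intro y _ hy
    simp only [Matrix.of_apply, hj]
    rw [if_neg, zero_mul]
    intro h; exact hy (by rw [h]; ring)
  · intro h; exact absurd (Finset.mem_univ _) h

lemma Omat_pow_inv (k : ZMod d) :
    (Omat d ^ k.val)⁻¹ = Matrix.diagonal fun a : ZMod d => psi d (-(a * k)) := by
  apply Matrix.inv_eq_right_inv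
  rw [Omat_pow, Matrix.diagonal_mul_diagonal]
  have hk : ((k.val : ℕ) : ZMod d) = k := ZMod.natCast_zmod_val k
  rw [hk]
  convert Matrix.diagonal_one with a
  rw [← psi_add]
  simp [psi_zero]

end

theorem stmt9 (d : ℕ) [NeZero d] (hd : 2 ≤ d) (c : Matrix (ZMod d) (ZMod d) ℂ) :
    Lop d c = (Fmat d)ᴴ * Matrix.hadamard (Fmat d) ((Fmat d)ᴴ * c * (Fmat d)ᴴ) := by
  have hd0 : (d : ℂ) ≠ 0 := Nat.cast_ne_zero.mpr (NeZero.ne d)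
  set s : ℂ := ((Real.sqrt d : ℝ) : ℂ) with hs_def
  have hs : s * s = (d : ℂ) := by
    rw [hs_def, ← Complex.ofReal_mul, Real.mul_self_sqrt (Nat.cast_nonneg d)]
    push_cast; rfl
  have hs0 : s ≠ 0 := fun h => hd0 (by rw [← hs, h, mul_zero])
  have hcast : ∀ x y : ZMod d, ((x.val * y.val : ℕ) : ZMod d) = x * y := by
    intro x y; push_cast [ZMod.natCast_zmod_val]; ring
  have hpow : ∀ x y : ZMod d, omegaRoot d ^ (x.val * y.val) = psi d (x * y) := by
    intro x y; rw [← psi_natCast, hcast]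
  have hconj : ∀ x y : ZMod d,
      (starRingEnd ℂ) (omegaRoot d ^ (x.val * y.val)) = psi d (-(x * y)) := by
    intro x y; rw [conj_omega_pow, hcast]
  ext a b
  have hL : Lop d c a b = (1 / (d:ℂ)) * ∑ k : ZMod d, c (b-a) k * psi d (-(b * k)) := by
    rw [Lop]
    simp only [Matrix.smul_apply, Matrix.sum_apply, smul_eq_mul]
    congr 1
    rw [Finset.sum_comm]
    refine Finset.sum_congr rfl fun k _ => ?_
    have hstep : ∀ j : ZMod d,
        c j k * ((Smat d ^ j.val)⁻¹ * (Omat d ^ k.val)⁻¹) a b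
        = if j = b - a then c j k * psi d (-(b * k)) else 0 := by
      intro j
      rw [Smat_pow_inv d j, Omat_pow_inv d k, Matrix.mul_diagonal]
      simp only [Matrix.of_apply]
      have hiff : (b = a + j) ↔ (j = b - a) := ⟨fun h => by rw [h]; ring, fun h => by rw [h]; ring⟩
      rw [if_congr hiff rfl rfl]
      split_ifs with h
      · ring
      · ring
    simp_rw [hstep]
    rw [Finset.sum_ite_eq' Finset.univ (b - a)]
    simp
  have hconjpsi : ∀ t : ZMod d, (starRingEnd ℂ) (psi d t) = psi d (-t) := by
    intro t
    rw [psi, conj_omega_pow, ZMod.natCast_zmod_val]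
  have hF : ∀ x y : ZMod d, Fmat d x y = psi d (x*y) / s := by
    intro x y; rw [Fmat, Matrix.of_apply, hpow, hs_def]
  have hFH : ∀ x y : ZMod d, (Fmat d)ᴴ x y = psi d (-(y*x)) / s := by
    intro x y
    rw [Matrix.conjTranspose_apply, hF, Complex.star_def, map_div₀, Complex.conj_ofReal,
      hconjpsi]
  have hpsi3 : ∀ m j : ZMod d,
      psi d (-(m*a)) * psi d (m*b) * psi d (-(j*m)) = psi d (m*(b-a-j)) := by
    intro m j; rw [← psi_add, ← psi_add]; congr 1; ring
  have hterm : ∀ (m k j : ZMod d),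
      psi d (-(m*a)) / s * (psi d (m*b) / s * (psi d (-(j*m)) / s * c j k * (psi d (-(b*k)) / s)))
      = c j k * psi d (-(b*k)) / ((d:ℂ)*(d:ℂ)) * psi d (m*(b-a-j)) := by
    intro m k j
    rw [← hpsi3 m j]
    field_simp
    linear_combination (-(psi d (-(m*a)) * psi d (m*b) * psi d (-(j*m)) * c j k *
      psi d (-(b*k)) * ((d:ℂ) + s*s))) * hs
  have hR : ((Fmat d)ᴴ * Matrix.hadamard (Fmat d) ((Fmat d)ᴴ * c * (Fmat d)ᴴ)) a b
      = ∑ m : ZMod d, ∑ k : ZMod d, ∑ j : ZMod d,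
          psi d (-(m*a)) / s * (psi d (m*b) / s * (psi d (-(j*m)) / s * c j k * (psi d (-(b*k)) / s))) := by
    rw [Matrix.mul_apply]
    refine Finset.sum_congr rfl fun m _ => ?_
    rw [Matrix.hadamard_apply, Matrix.mul_apply, hFH, hF, Finset.mul_sum, Finset.mul_sum]
    refine Finset.sum_congr rfl fun k _ => ?_
    rw [Matrix.mul_apply, Finset.sum_mul, Finset.mul_sum, Finset.mul_sum]
    refine Finset.sum_congr rfl fun j _ => ?_
    rw [hFH, hFH]
  rw [hL, hR]
  conv_rhs => rw [Finset.sum_comm]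
  rw [Finset.mul_sum]
  refine Finset.sum_congr rfl fun k _ => ?_
  rw [Finset.sum_comm]
  simp_rw [hterm]
  simp_rw [← Finset.mul_sum, psi_sum, sub_eq_zero, mul_ite, mul_zero]
  rw [Finset.sum_ite_eq]
  simp only [Finset.mem_univ, if_true]
  field_simp
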